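/- Let G = ℤ/gℤ, let a, b be coprime positive integers, and let U ⊆ G be any nonempty subset. Then |aU + bU| ≥ |U|. -/

import Mathlib

theorem card_linear_image_ge (g : ℕ) [NeZero g]
    (a b : ℕ) (ha : 0 < a) (hb : 0 < b) (hab : Nat.Coprime a b)
    (U : Finset (ZMod g)) (hU : U.Nonempty) :
    U.card ≤ (Finset.image₂ (fun x y => (a : ZMod g) * x + (b : ZMod g) * y) U U).card := by
  classical
  have hg : 0 < g := Nat.pos_of_ne_zero (NeZero.ne g)
  set m : ℕ := Nat.gcd (a ^ g) g with hm
  have hmdvd : m ∣ g := Nat.gcd_dvd_right _ _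
  set n : ℕ := g / m with hn
  have hmpos : 0 < m := Nat.gcd_pos_of_pos_right _ hg
  have hmn : m * n = g := Nat.mul_div_cancel' hmdvd
  have hnpos : 0 < n := by
    rcases Nat.eq_zero_or_pos n with h | h
    · rw [h, mul_zero] at hmn; omega
    · exact h
  haveI : NeZero n := ⟨hnpos.ne'⟩
  have hndvd : n ∣ g := ⟨m, by rw [← hmn, mul_comm]⟩
  -- b coprime to m
  have hbm : Nat.Coprime b m :=
    Nat.Coprime.coprime_dvd_right (Nat.gcd_dvd_left _ _) ((hab.pow_left g).symm)
  -- a coprime to n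
  have han : Nat.Coprime a n := by
    by_contra h
    obtain ⟨p, hp, hpd⟩ := Nat.exists_prime_and_dvd h
    have hpa : p ∣ a := hpd.trans (Nat.gcd_dvd_left _ _)
    have hpn : p ∣ n := hpd.trans (Nat.gcd_dvd_right _ _)
    have hfact : g.factorization = m.factorization + n.factorization := by
      rw [← hmn]; exact Nat.factorization_mul hmpos.ne' hnpos.ne'
    have hmf : m.factorization p = g.factorization p := by
      rw [hm, Nat.factorization_gcd (pow_ne_zero _ ha.ne') hg.ne']
      simp only [Finsupp.inf_apply, Nat.factorization_pow, Finsupp.smul_apply, smul_eq_mul]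
      have h1 : 1 ≤ a.factorization p := hp.factorization_pos_of_dvd ha.ne' hpa
      have h2 : g.factorization p < g := Nat.factorization_lt p hg.ne'
      exact min_eq_right (by nlinarith)
    have hnf : 0 < n.factorization p := hp.factorization_pos_of_dvd hnpos.ne' hpn
    have := congrFun (congrArg (fun f => f.toFun) hfact) p
    try simp only [Finsupp.add_apply] at hfact
    have : g.factorization p = m.factorization p + n.factorization p := by
      rw [hfact]; simp
    omega
  -- the projection
  set π : ZMod g →+* ZMod n := ZMod.castHom hndvd (ZMod n) with hπ
  -- cancellation lemma for b
  have hbcancel : ∀ u₁ u₂ : ZMod g, u₁ ∈ U → u₂ ∈ U → π u₁ = π u₂ →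
      (b : ZMod g) * u₁ = (b : ZMod g) * u₂ → u₁ = u₂ := by
    intro u₁ u₂ _ _ hπeq hbeq
    have hw : π (u₁ - u₂) = 0 := by rw [map_sub, hπeq, sub_self]
    set w : ZMod g := u₁ - u₂ with hwdef
    have hbw : (b : ZMod g) * w = 0 := by rw [hwdef, mul_sub, hbeq, sub_self]
    have hwval : ((w.val : ℕ) : ZMod g) = w := ZMod.natCast_rightInverse w
    have hndvdval : n ∣ w.val := by
      rw [← ZMod.natCast_eq_zero_iff w.val n]
      have : π w = ((w.val : ℕ) : ZMod n) := by
        rw [hπ, ZMod.castHom_apply, ← ZMod.natCast_val]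
      rw [← this, hw]
    have hgdvd : g ∣ b * w.val := by
      rw [← ZMod.natCast_eq_zero_iff (b * w.val) g, Nat.cast_mul, hwval, hbw]
    obtain ⟨t, ht⟩ := hndvdval
    have hmdvdbt : m ∣ b * t := by
      have : m * n ∣ b * (n * t) := by rw [hmn, ← ht]; exact hgdvd
      have h2 : n * m ∣ n * (b * t) := by
        have := this
        calc n * m ∣ b * (n * t) := by rwa [mul_comm n m]
        _ = n * (b * t) := by ring
      exact (mul_dvd_mul_iff_left hnpos.ne').mp h2
    have hmt : m ∣ t := hbm.symm.dvd_of_dvd_mul_left hmdvdbt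
    have hgw : g ∣ w.val := by
      obtain ⟨s, hs⟩ := hmt
      exact ⟨s, by rw [ht, hs, ← hmn]; ring⟩
    have : w.val = 0 := Nat.eq_zero_of_dvd_of_lt hgw (ZMod.val_lt w)
    have hw0 : w = 0 := by rw [← hwval, this, Nat.cast_zero]
    have := sub_eq_zero.mp (hwdef ▸ hw0)
    exact this
  -- a is a unit mod n
  have haunit : IsUnit ((a : ZMod n)) := (ZMod.isUnit_iff_coprime a n).mpr han
  -- image and max fiber
  set K : Finset (ZMod n) := U.image π with hK
  obtain ⟨c₀, hc₀K, hc₀max⟩ := Finset.exists_max_image K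
    (fun c => (U.filter (fun u => π u = c)).card) (hU.image π)
  set U₀ : Finset (ZMod g) := U.filter (fun u => π u = c₀) with hU₀
  set M : ℕ := U₀.card with hM
  have hcard1 : U.card ≤ M * K.card :=
    Finset.card_le_mul_card_image U M (fun c hc => hc₀max c hc)
  -- the pick function
  have hpick : ∀ c ∈ K, ∃ u ∈ U, π u = c := by
    intro c hc
    obtain ⟨u, hu, hue⟩ := Finset.mem_image.mp hc
    exact ⟨u, hu, hue⟩
  set pick : ZMod n → ZMod g := fun c =>
    if h : ∃ u ∈ U, π u = c then h.choose else 0 with hpickdef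
  have hpickmem : ∀ c ∈ K, pick c ∈ U ∧ π (pick c) = c := by
    intro c hc
    have h := hpick c hc
    simp only [hpickdef, dif_pos h]
    exact ⟨h.choose_spec.1, h.choose_spec.2⟩
  -- the injection
  have hcard2 : (K ×ˢ U₀).card ≤
      (Finset.image₂ (fun x y => (a : ZMod g) * x + (b : ZMod g) * y) U U).card := by
    apply Finset.card_le_card_of_injOn
      (fun p => (a : ZMod g) * pick p.1 + (b : ZMod g) * p.2)
    · rintro ⟨c, u⟩ hp
      rw [Finset.mem_coe, Finset.mem_product] at hp
      exact Finset.mem_image₂_of_mem (hpickmem c hp.1).1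
        (Finset.mem_filter.mp hp.2).1
    · rintro ⟨c₁, u₁⟩ hp₁ ⟨c₂, u₂⟩ hp₂ heq
      simp only [Finset.coe_product, Set.mem_prod, Finset.mem_coe] at hp₁ hp₂
      obtain ⟨hc₁, hu₁⟩ := hp₁
      obtain ⟨hc₂, hu₂⟩ := hp₂
      have hu₁U : u₁ ∈ U := (Finset.mem_filter.mp hu₁).1
      have hu₂U : u₂ ∈ U := (Finset.mem_filter.mp hu₂).1
      have hu₁π : π u₁ = c₀ := (Finset.mem_filter.mp hu₁).2
      have hu₂π : π u₂ = c₀ := (Finset.mem_filter.mp hu₂).2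
      simp only at heq
      have hπeq : (a : ZMod n) * c₁ + (b : ZMod n) * c₀ =
          (a : ZMod n) * c₂ + (b : ZMod n) * c₀ := by
        have := congrArg π heq
        simpa [map_add, map_mul, map_natCast, (hpickmem c₁ hc₁).2,
          (hpickmem c₂ hc₂).2, hu₁π, hu₂π] using this
      have hceq : c₁ = c₂ := by
        have h2 : (a : ZMod n) * c₁ = (a : ZMod n) * c₂ := by
          exact add_right_cancel hπeq
        exact haunit.mul_left_cancel h2
      subst hceq
      have hbeq : (b : ZMod g) * u₁ = (b : ZMod g) * u₂ := add_left_cancel heq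
      have : u₁ = u₂ := hbcancel u₁ u₂ hu₁U hu₂U (by rw [hu₁π, hu₂π]) hbeq
      rw [this]
  calc U.card ≤ M * K.card := hcard1
    _ = (K ×ˢ U₀).card := by rw [Finset.card_product]; ring
    _ ≤ _ := hcard2
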